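/- Let d be a positive integer and δ > 0. Suppose x_1, …, x_m is a sequence of points of d-dimensional Euclidean space with ‖x_t‖₂ ≤ 1 for every t, and suppose that for all indices s < t there exist u, w in the space with ‖u‖₂ ≤ 1, ‖w‖₂ = 1, ⟨w, x_t + u⟩ ≥ δ and ⟨w, x_s + u⟩ < −δ. Then m ≤ (1 + 1/δ)^d. (This bounds the diameter of the concept class of d-dimensional hyperplanes with margin δ.) -/

import Mathlib

open scoped RealInnerProductSpace ENNReal

open MeasureTheory Metric

/-- Diameter bound for hyperplanes with margin δ. If `x 1, …, x m` in
`d`-dimensional Euclidean space satisfy `‖x t‖ ≤ 1` for all `t`, and for all `s < t`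
there exist `u, w` with `‖u‖ ≤ 1`, `‖w‖ = 1`, `⟪w, x t + u⟫ ≥ δ` and
`⟪w, x s + u⟫ < -δ`, then `m ≤ (1 + 1/δ)^d`. -/
theorem stmt_3 (d : ℕ) (hd : 0 < d) (δ : ℝ) (hδ : 0 < δ)
    (m : ℕ) (x : Fin m → EuclideanSpace ℝ (Fin d))
    (hnorm : ∀ t, ‖x t‖ ≤ 1)
    (hsep : ∀ s t : Fin m, s < t →
      ∃ u w : EuclideanSpace ℝ (Fin d), ‖u‖ ≤ 1 ∧ ‖w‖ = 1 ∧
        δ ≤ ⟪w, x t + u⟫ ∧ ⟪w, x s + u⟫ < -δ) :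
    (m : ℝ) ≤ (1 + 1 / δ) ^ d := by
  -- separation: distinct points are more than 2δ apart
  have hsep' : ∀ s t : Fin m, s < t → 2 * δ < dist (x s) (x t) := by
    intro s t hst
    obtain ⟨u, w, hu, hw, h1, h2⟩ := hsep s t hst
    have key : 2 * δ < ⟪w, x t - x s⟫ := by
      have : ⟪w, x t - x s⟫ = ⟪w, x t + u⟫ - ⟪w, x s + u⟫ := by
        rw [← inner_sub_right]; congr 1; abel
      rw [this]; linarith
    have hle : ⟪w, x t - x s⟫ ≤ ‖x t - x s‖ := by
      calc ⟪w, x t - x s⟫ ≤ ‖w‖ * ‖x t - x s‖ := real_inner_le_norm _ _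
        _ = ‖x t - x s‖ := by rw [hw, one_mul]
    rw [dist_eq_norm, norm_sub_rev]
    linarith
  have hsep'' : ∀ s t : Fin m, s ≠ t → 2 * δ < dist (x s) (x t) := by
    intro s t h
    rcases lt_or_gt_of_ne h with h' | h'
    · exact hsep' s t h'
    · rw [dist_comm]; exact hsep' t s h'
  -- disjoint balls
  have hdisj : Pairwise (Function.onFun Disjoint (fun i => ball (x i) δ)) := by
    intro i j hij
    exact ball_disjoint_ball (by linarith [hsep'' i j hij])
  -- union contained in big ball
  have hsub : (⋃ i, ball (x i) δ) ⊆ ball (0 : EuclideanSpace ℝ (Fin d)) (1 + δ) := by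
    intro y hy
    simp only [Set.mem_iUnion, mem_ball] at hy ⊢
    obtain ⟨i, hi⟩ := hy
    calc dist y 0 ≤ dist y (x i) + dist (x i) 0 := dist_triangle _ _ _
      _ < δ + 1 := by
          have := hnorm i
          rw [dist_zero_right] at *
          linarith
      _ = 1 + δ := by ring
  -- volumes
  have hmeas : volume (⋃ i, ball (x i) δ) = ∑' i : Fin m, volume (ball (x i) δ) :=
    measure_iUnion hdisj fun i => measurableSet_ball
  have hrank : Module.finrank ℝ (EuclideanSpace ℝ (Fin d)) = d :=
    finrank_euclideanSpace_fin
  haveI : Nontrivial (EuclideanSpace ℝ (Fin d)) :=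
    ⟨EuclideanSpace.single ⟨0, hd⟩ 1, 0, by
      intro h
      have := congrArg (fun v => v ⟨0, hd⟩) h
      simp [EuclideanSpace.single_apply] at this⟩
  have hballvol : ∀ i : Fin m, volume (ball (x i) δ)
      = ENNReal.ofReal (δ ^ d) * volume (ball (0 : EuclideanSpace ℝ (Fin d)) 1) := by
    intro i
    rw [Measure.addHaar_ball volume (x i) hδ.le, hrank]
  have hbigvol : volume (ball (0 : EuclideanSpace ℝ (Fin d)) (1 + δ))
      = ENNReal.ofReal ((1 + δ) ^ d) * volume (ball (0 : EuclideanSpace ℝ (Fin d)) 1) := by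
    rw [Measure.addHaar_ball volume _ (by linarith : (0:ℝ) ≤ 1 + δ), hrank]
  set V := volume (ball (0 : EuclideanSpace ℝ (Fin d)) 1) with hV
  have hVpos : V ≠ 0 := (measure_ball_pos volume 0 one_pos).ne'
  have hVfin : V ≠ ⊤ := measure_ball_lt_top.ne
  have hchain : (m : ℝ≥0∞) * (ENNReal.ofReal (δ ^ d) * V)
      ≤ ENNReal.ofReal ((1 + δ) ^ d) * V := by
    calc (m : ℝ≥0∞) * (ENNReal.ofReal (δ ^ d) * V)
        = ∑' i : Fin m, ENNReal.ofReal (δ ^ d) * V := by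
          rw [tsum_fintype]
          simp [Finset.sum_const, mul_comm]
      _ = ∑' i : Fin m, volume (ball (x i) δ) := by
          congr 1; ext i; rw [hballvol i]
      _ = volume (⋃ i, ball (x i) δ) := hmeas.symm
      _ ≤ volume (ball (0 : EuclideanSpace ℝ (Fin d)) (1 + δ)) := measure_mono hsub
      _ = ENNReal.ofReal ((1 + δ) ^ d) * V := hbigvol
  have hchain' : (m : ℝ≥0∞) * ENNReal.ofReal (δ ^ d) ≤ ENNReal.ofReal ((1 + δ) ^ d) := by
    rw [← mul_assoc] at hchain
    exact (ENNReal.mul_le_mul_iff_left hVpos hVfin).mp hchain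
  have hreal : (m : ℝ) * δ ^ d ≤ (1 + δ) ^ d := by
    have : ENNReal.ofReal ((m : ℝ) * δ ^ d) ≤ ENNReal.ofReal ((1 + δ) ^ d) := by
      rw [ENNReal.ofReal_mul (by positivity)]
      simpa [ENNReal.ofReal_natCast] using hchain'
    exact (ENNReal.ofReal_le_ofReal_iff (by positivity)).mp this
  have hδd : (0:ℝ) < δ ^ d := by positivity
  rw [show (1 + 1/δ : ℝ) = (1 + δ)/δ by rw [add_div, div_self hδ.ne', add_comm], div_pow]
  rw [le_div_iff₀ hδd]
  exact hreal
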